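/- The expected Data Reconstruction Attack success rate of MSS satisfies E[DRA] ≥ (1/ℓ) ∑_{j=0}^{ℓ−1} p_j / (ω_j · ⌈k/m_j⌉), with equality when each m_j divides k. -/

import Mathlib

open Finset

lemma resid_card_le (k m u : ℕ) (hm : 0 < m) :
    ((Finset.range k).filter (fun x => x % m = u)).card ≤ ⌈(k : ℝ) / (m : ℝ)⌉₊ := by
  classical
  rw [← Finset.card_range ⌈(k : ℝ) / (m : ℝ)⌉₊]
  apply Finset.card_le_card_of_injOn (fun x => x / m)
  · intro x hx
    simp only [Finset.mem_coe, Finset.mem_filter, Finset.mem_range] at hx ⊢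
    rw [Nat.lt_ceil]
    have h1 : x / m * m < k := lt_of_le_of_lt (Nat.div_mul_le_self x m) hx.1
    have h2 : ((x / m : ℕ) : ℝ) * (m : ℝ) < (k : ℝ) := by exact_mod_cast h1
    rw [lt_div_iff₀ (by exact_mod_cast hm)]
    exact h2
  · intro x hx y hy hxy
    simp only [Finset.mem_coe, Finset.mem_filter, Finset.mem_range] at hx hy
    have hxy' : x / m = y / m := hxy
    have hm' : m * (x / m) = m * (y / m) := by rw [hxy']
    have hx' := Nat.div_add_mod x m
    have hy' := Nat.div_add_mod y m
    omega

lemma resid_card_eq (k m z : ℕ) (hm : 0 < m) (hd : m ∣ k) (hz : z < m) :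
    ((Finset.range k).filter (fun x => x % m = z)).card = k / m := by
  classical
  obtain ⟨q, rfl⟩ := hd
  have hq : (m * q) / m = q := Nat.mul_div_cancel_left q hm
  rw [hq]
  have himg : (Finset.range (m * q)).filter (fun x => x % m = z) =
      (Finset.range q).image (fun t => z + t * m) := by
    ext x
    simp only [Finset.mem_filter, Finset.mem_range, Finset.mem_image]
    constructor
    · rintro ⟨hx, hmod⟩
      refine ⟨x / m, ?_, ?_⟩
      · rw [Nat.div_lt_iff_lt_mul hm]
        have : m * q = q * m := Nat.mul_comm m q
        omega
      · have h1 := Nat.div_add_mod x m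
        have h2 : m * (x / m) = x / m * m := Nat.mul_comm m (x / m)
        omega
    · rintro ⟨t, ht, rfl⟩
      constructor
      · have h1 : (t + 1) * m ≤ q * m := Nat.mul_le_mul_right m ht
        have h2 : (t + 1) * m = t * m + m := by ring
        have h3 : q * m = m * q := Nat.mul_comm q m
        omega
      · rw [Nat.add_mul_mod_self_right]; exact Nat.mod_eq_of_lt hz
  rw [himg, Finset.card_image_of_injective _ (fun a b h => by
    simp only [add_right_inj] at h
    exact Nat.eq_of_mul_eq_mul_right hm h), Finset.card_range]

lemma resid_sum (k m : ℕ) (hm : 0 < m) :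
    ∑ z ∈ Finset.range m, ((Finset.range k).filter (fun x => x % m = z)).card = k := by
  classical
  have h := Finset.card_eq_sum_card_fiberwise (s := Finset.range k) (t := Finset.range m)
    (f := fun x => x % m) (fun x _ => Finset.mem_range.mpr (Nat.mod_lt x hm))
  rw [Finset.card_range] at h
  exact h.symm

section Inner

variable (k m w : ℕ)

lemma powcard_pos (hw1 : 1 ≤ w) (hwm : w ≤ m) (z : ℕ) (hz : z ∈ Finset.range m) :
    0 < ((((Finset.range m).erase z).powersetCard (w - 1)).card : ℕ) := by
  rw [Finset.card_powersetCard, Finset.card_erase_of_mem hz, Finset.card_range]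
  exact Nat.choose_pos (by omega)

lemma inner_ge (hk : 0 < k) (hm : 0 < m) (hw1 : 1 ≤ w) (hwm : w ≤ m) :
    1 / ((w : ℝ) * (⌈(k : ℝ) / (m : ℝ)⌉₊ : ℝ)) ≤
    ∑ z ∈ Finset.range m,
      ((((Finset.range k).filter (fun x => x % m = z)).card : ℝ) / k) *
      ((∑ S ∈ ((Finset.range m).erase z).powersetCard (w - 1),
          (1 : ℝ) / ((((Finset.range k).filter (fun x => x % m = z)).card : ℝ)
            + ∑ u ∈ S, (((Finset.range k).filter (fun x => x % m = u)).card : ℝ)) ) /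
        ((((Finset.range m).erase z).powersetCard (w - 1)).card : ℝ)) := by
  classical
  set M : ℕ := ⌈(k : ℝ) / (m : ℝ)⌉₊ with hM
  have hMpos : 0 < M := Nat.ceil_pos.mpr (div_pos (by exact_mod_cast hk) (by exact_mod_cast hm))
  have hwM : 0 < (w : ℝ) * (M : ℝ) := by positivity
  have key : (1 : ℝ) / ((w : ℝ) * (M : ℝ)) =
      ∑ z ∈ Finset.range m,
        ((((Finset.range k).filter (fun x => x % m = z)).card : ℝ) / k) *
          (1 / ((w : ℝ) * (M : ℝ))) := by
    rw [← Finset.sum_mul, ← Finset.sum_div]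
    have : ∑ z ∈ Finset.range m, ((((Finset.range k).filter (fun x => x % m = z)).card : ℝ)) = k := by
      exact_mod_cast resid_sum k m hm
    rw [this, div_self (by exact_mod_cast hk.ne'), one_mul]
  rw [key]
  apply Finset.sum_le_sum
  intro z hz
  set nz : ℕ := ((Finset.range k).filter (fun x => x % m = z)).card with hnz
  rcases Nat.eq_zero_or_pos nz with h0 | h1
  · rw [h0]
    simp only [Nat.cast_zero, zero_div, zero_mul, le_refl]
  · apply mul_le_mul_of_nonneg_left _ (by positivity)
    -- show 1/(wM) ≤ Erec z
    set N : ℕ := ((((Finset.range m).erase z).powersetCard (w - 1)).card : ℕ) with hN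
    have hNpos : 0 < N := powcard_pos m w hw1 hwm z hz
    rw [le_div_iff₀ (by exact_mod_cast hNpos)]
    have bound : ∀ S ∈ ((Finset.range m).erase z).powersetCard (w - 1),
        (1 : ℝ) / ((w : ℝ) * (M : ℝ)) ≤
        (1 : ℝ) / ((nz : ℝ) + ∑ u ∈ S, (((Finset.range k).filter (fun x => x % m = u)).card : ℝ)) := by
      intro S hS
      obtain ⟨hSsub, hScard⟩ := Finset.mem_powersetCard.mp hS
      have hsum_nonneg : (0 : ℝ) ≤ ∑ u ∈ S, (((Finset.range k).filter (fun x => x % m = u)).card : ℝ) := by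
        exact Finset.sum_nonneg (fun u _ => by positivity)
      have hd_pos : (0 : ℝ) < (nz : ℝ) + ∑ u ∈ S, (((Finset.range k).filter (fun x => x % m = u)).card : ℝ) := by
        have : (1 : ℝ) ≤ (nz : ℝ) := by exact_mod_cast h1
        linarith
      have hd_le : (nz : ℝ) + ∑ u ∈ S, (((Finset.range k).filter (fun x => x % m = u)).card : ℝ)
          ≤ (w : ℝ) * (M : ℝ) := by
        have h1' : (nz : ℝ) ≤ (M : ℝ) := by exact_mod_cast resid_card_le k m z hm
        have h2' : ∑ u ∈ S, (((Finset.range k).filter (fun x => x % m = u)).card : ℝ)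
            ≤ (S.card : ℝ) * (M : ℝ) := by
          rw [← nsmul_eq_mul]
          apply Finset.sum_le_card_nsmul
          intro u _
          exact_mod_cast resid_card_le k m u hm
        rw [hScard] at h2'
        have hcast : ((w - 1 : ℕ) : ℝ) = (w : ℝ) - 1 := by
          rw [Nat.cast_sub hw1, Nat.cast_one]
        rw [hcast] at h2'
        nlinarith
      exact one_div_le_one_div_of_le hd_pos hd_le
    calc 1 / ((w : ℝ) * (M : ℝ)) * (N : ℝ)
        = N • (1 / ((w : ℝ) * (M : ℝ))) := by rw [nsmul_eq_mul]; ring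
      _ ≤ ∑ S ∈ ((Finset.range m).erase z).powersetCard (w - 1),
            (1 : ℝ) / ((nz : ℝ) + ∑ u ∈ S, (((Finset.range k).filter (fun x => x % m = u)).card : ℝ)) := by
          exact Finset.card_nsmul_le_sum _ _ _ bound

lemma inner_eq (hk : 0 < k) (hm : 0 < m) (hw1 : 1 ≤ w) (hwm : w ≤ m) (hd : m ∣ k) :
    ∑ z ∈ Finset.range m,
      ((((Finset.range k).filter (fun x => x % m = z)).card : ℝ) / k) *
      ((∑ S ∈ ((Finset.range m).erase z).powersetCard (w - 1),
          (1 : ℝ) / ((((Finset.range k).filter (fun x => x % m = z)).card : ℝ)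
            + ∑ u ∈ S, (((Finset.range k).filter (fun x => x % m = u)).card : ℝ)) ) /
        ((((Finset.range m).erase z).powersetCard (w - 1)).card : ℝ)) =
    1 / ((w : ℝ) * (⌈(k : ℝ) / (m : ℝ)⌉₊ : ℝ)) := by
  classical
  set q : ℕ := k / m with hq
  have hmq : m * q = k := Nat.mul_div_cancel' hd
  have hqpos : 0 < q := by
    rcases Nat.eq_zero_or_pos q with h | h
    · exfalso; rw [h, Nat.mul_zero] at hmq; omega
    · exact h
  have hceil : (⌈(k : ℝ) / (m : ℝ)⌉₊ : ℕ) = q := by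
    have : (k : ℝ) / (m : ℝ) = (q : ℝ) := by
      rw [← hmq]
      push_cast
      rw [mul_div_assoc, mul_comm]
      rw [div_mul_eq_mul_div, mul_div_assoc, div_self (by exact_mod_cast hm.ne'), mul_one]
    rw [this, Nat.ceil_natCast]
  rw [hceil]
  have hterm : ∀ z ∈ Finset.range m,
      ((((Finset.range k).filter (fun x => x % m = z)).card : ℝ) / k) *
      ((∑ S ∈ ((Finset.range m).erase z).powersetCard (w - 1),
          (1 : ℝ) / ((((Finset.range k).filter (fun x => x % m = z)).card : ℝ)
            + ∑ u ∈ S, (((Finset.range k).filter (fun x => x % m = u)).card : ℝ)) ) /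
        ((((Finset.range m).erase z).powersetCard (w - 1)).card : ℝ))
      = ((q : ℝ) / k) * (1 / ((w : ℝ) * (q : ℝ))) := by
    intro z hz
    have hnz : ((Finset.range k).filter (fun x => x % m = z)).card = q :=
      resid_card_eq k m z hm hd (Finset.mem_range.mp hz)
    have hN : 0 < ((((Finset.range m).erase z).powersetCard (w - 1)).card : ℕ) :=
      powcard_pos m w hw1 hwm z hz
    have hsumS : ∀ S ∈ ((Finset.range m).erase z).powersetCard (w - 1),
        (1 : ℝ) / ((((Finset.range k).filter (fun x => x % m = z)).card : ℝ)
            + ∑ u ∈ S, (((Finset.range k).filter (fun x => x % m = u)).card : ℝ))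
        = 1 / ((w : ℝ) * (q : ℝ)) := by
      intro S hS
      obtain ⟨hSsub, hScard⟩ := Finset.mem_powersetCard.mp hS
      have hsum : ∑ u ∈ S, (((Finset.range k).filter (fun x => x % m = u)).card : ℝ)
          = ((w : ℝ) - 1) * (q : ℝ) := by
        have : ∀ u ∈ S, (((Finset.range k).filter (fun x => x % m = u)).card : ℝ) = (q : ℝ) := by
          intro u hu
          have hu' : u ∈ Finset.range m := Finset.mem_of_mem_erase (hSsub hu)
          exact_mod_cast congrArg Nat.cast (resid_card_eq k m u hm hd (Finset.mem_range.mp hu'))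
        rw [Finset.sum_congr rfl this, Finset.sum_const, hScard, nsmul_eq_mul,
          Nat.cast_sub hw1, Nat.cast_one]
      rw [hnz, hsum]
      ring_nf
    have hN' : (((((Finset.range m).erase z).powersetCard (w - 1)).card : ℕ) : ℝ) ≠ 0 := by
      exact_mod_cast hN.ne'
    rw [Finset.sum_congr rfl hsumS, hnz, Finset.sum_const, nsmul_eq_mul,
      mul_div_cancel_left₀ _ hN']
  rw [Finset.sum_congr rfl hterm, Finset.sum_const, Finset.card_range, nsmul_eq_mul]
  have hk' : (k : ℝ) ≠ 0 := by exact_mod_cast hk.ne'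
  have hq' : (q : ℝ) ≠ 0 := by exact_mod_cast hqpos.ne'
  have hw' : (w : ℝ) ≠ 0 := by
    have : 0 < w := hw1
    exact_mod_cast this.ne'
  have hmk : (m : ℝ) * (q : ℝ) = (k : ℝ) := by exact_mod_cast hmq
  field_simp
  nlinarith [hmk]

end Inner

/-- **Lower bound on the expected DRA of MSS.** With residue multiplicities
`n j z = |{x ∈ [k] : x mod m j = z}|` and filler weight `T = ∑_{u ∈ S} n j u` for a
uniform `(ω j − 1)`-subset `S` of `[m j] \ {z}`, the exact expected reconstruction
success rate
`E[DRA] = (1/ℓ) ∑ j, p j ∑ z (n j z / k) · E[1/(n j z + T)]`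
satisfies `E[DRA] ≥ (1/ℓ) ∑ j, p j / (ω j · ⌈k/m j⌉)`, with equality when every
`m j` divides `k`. -/
theorem mss_dra_lower_bound (ℓ k : ℕ) (hℓ : 0 < ℓ) (hk : 0 < k)
    (m ω : Fin ℓ → ℕ) (p : Fin ℓ → ℝ)
    (hm : ∀ j, 0 < m j) (hω : ∀ j, 1 ≤ ω j ∧ ω j ≤ m j)
    (hp : ∀ j, 0 ≤ p j ∧ p j ≤ 1) :
    let n : Fin ℓ → ℕ → ℕ := fun j z => ((Finset.range k).filter (fun x => x % m j = z)).card
    let Erec : Fin ℓ → ℕ → ℝ := fun j z =>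
      (∑ S ∈ ((Finset.range (m j)).erase z).powersetCard (ω j - 1),
          (1 : ℝ) / ((n j z : ℝ) + ∑ u ∈ S, (n j u : ℝ))) /
        ((((Finset.range (m j)).erase z).powersetCard (ω j - 1)).card : ℝ)
    let DRA : ℝ := (1 / ℓ : ℝ) * ∑ j, p j * ∑ z ∈ Finset.range (m j),
      ((n j z : ℝ) / k) * Erec j z
    ((1 / ℓ : ℝ) * ∑ j, p j / ((ω j : ℝ) * (⌈(k : ℝ) / (m j : ℝ)⌉₊ : ℝ)) ≤ DRA) ∧
      ((∀ j, m j ∣ k) →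
        DRA = (1 / ℓ : ℝ) * ∑ j, p j / ((ω j : ℝ) * (⌈(k : ℝ) / (m j : ℝ)⌉₊ : ℝ))) := by
  intro n Erec DRA
  constructor
  · simp only [DRA, Erec, n]
    apply mul_le_mul_of_nonneg_left _ (by positivity)
    apply Finset.sum_le_sum
    intro j _
    rw [div_eq_mul_one_div]
    exact mul_le_mul_of_nonneg_left
      (inner_ge k (m j) (ω j) hk (hm j) (hω j).1 (hω j).2) (hp j).1
  · intro hdvd
    simp only [DRA, Erec, n]
    congr 1
    apply Finset.sum_congr rfl
    intro j _
    rw [inner_eq k (m j) (ω j) hk (hm j) (hω j).1 (hω j).2 (hdvd j), mul_one_div]
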